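/- The number of k-negative paths of length 2n is independent of k: for all k with 0 ≤ k < n, the number of paths from (0,0) to (2n,0) with steps (1,1),(1,-1) having exactly 2k steps below the x-axis equals the number having exactly 2(k+1) steps below the x-axis. -/

import Mathlib

def stepVal (b : Bool) : ℤ := if b then 1 else -1

def psum {m : ℕ} (f : Fin m → Bool) (p : ℕ) : ℤ :=
  (((List.ofFn f).take p).map stepVal).sum

def belowSteps {m : ℕ} (f : Fin m → Bool) : Finset (Fin m) :=
  Finset.univ.filter fun i => min (psum f i.1) (psum f (i.1 + 1)) < 0

namespace CF

def sumL (l : List Bool) : ℤ := (l.map stepVal).sum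

@[simp] lemma sumL_nil : sumL [] = 0 := rfl
@[simp] lemma sumL_cons (b : Bool) (t : List Bool) :
    sumL (b :: t) = stepVal b + sumL t := rfl
@[simp] lemma sumL_append (x y : List Bool) : sumL (x ++ y) = sumL x + sumL y := by
  simp [sumL]

lemma stepVal_cases (b : Bool) : stepVal b = 1 ∨ stepVal b = -1 := by
  cases b <;> simp [stepVal]

def bc : ℤ → List Bool → ℕ
  | _, [] => 0
  | h, b :: t => (if min h (h + stepVal b) < 0 then 1 else 0) + bc (h + stepVal b) t

@[simp] lemma bc_nil (h : ℤ) : bc h [] = 0 := rfl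
lemma bc_cons (h : ℤ) (b : Bool) (t : List Bool) :
    bc h (b :: t) = (if min h (h + stepVal b) < 0 then 1 else 0) + bc (h + stepVal b) t := rfl

lemma bc_append (x : List Bool) : ∀ (h : ℤ) (y : List Bool),
    bc h (x ++ y) = bc h x + bc (h + sumL x) y := by
  induction x with
  | nil => intro h y; simp
  | cons b t ih =>
    intro h y
    simp only [List.cons_append, bc_cons, ih, sumL_cons, add_assoc]

lemma bc_le_length (h : ℤ) (x : List Bool) : bc h x ≤ x.length := by
  induction x generalizing h with
  | nil => simp
  | cons b t ih =>
    simp only [bc_cons, List.length_cons]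
    have := ih (h + stepVal b)
    split <;> omega

lemma bc_eq_length_of {h : ℤ} {x : List Bool}
    (hx : ∀ j, j ≤ x.length → h + sumL (x.take j) ≤ 0) : bc h x = x.length := by
  induction x generalizing h with
  | nil => simp
  | cons b t ih =>
    have h0 : h ≤ 0 := by simpa using hx 0 (by simp)
    have h1 : h + stepVal b ≤ 0 := by
      have := hx 1 (by simp)
      simpa using this
    have hmin : min h (h + stepVal b) < 0 := by
      rcases stepVal_cases b with e | e <;> omega
    rw [bc_cons, if_pos hmin, ih]
    · simp [Nat.add_comm]
    · intro j hj
      have := hx (j + 1) (by simpa using hj)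
      simpa [add_assoc] using this

lemma bc_eq_zero_of {h : ℤ} {x : List Bool}
    (hx : ∀ j, j ≤ x.length → 0 ≤ h + sumL (x.take j)) : bc h x = 0 := by
  induction x generalizing h with
  | nil => simp
  | cons b t ih =>
    have h0 : 0 ≤ h := by simpa using hx 0 (by simp)
    have h1 : 0 ≤ h + stepVal b := by
      have := hx 1 (by simp)
      simpa using this
    have hmin : ¬ min h (h + stepVal b) < 0 := by
      rcases stepVal_cases b with e | e <;> omega
    rw [bc_cons, if_neg hmin, ih]
    intro j hj
    have := hx (j + 1) (by simpa using hj)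
    simpa [add_assoc] using this


/-! ### maximal below-prefix splitter -/

def sb : ℤ → List Bool → List Bool × List Bool
  | _, [] => ([], [])
  | h, b :: t =>
    if min h (h + stepVal b) < 0 then
      (b :: (sb (h + stepVal b) t).1, (sb (h + stepVal b) t).2)
    else ([], b :: t)

lemma sb_eq : ∀ (h : ℤ) (l : List Bool), (sb h l).1 ++ (sb h l).2 = l := by
  intro h l
  induction l generalizing h with
  | nil => rfl
  | cons b t ih =>
    rw [sb]
    split
    · simpa using ih (h + stepVal b)
    · rfl

lemma sb_heights {h : ℤ} (hh : h ≤ 0) (l : List Bool) :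
    ∀ j, j ≤ (sb h l).1.length → h + sumL ((sb h l).1.take j) ≤ 0 := by
  induction l generalizing h with
  | nil => intro j hj; simpa [sb] using hh
  | cons b t ih =>
    intro j hj
    by_cases hmin : min h (h + stepVal b) < 0
    · rw [sb, if_pos hmin] at hj ⊢
      have hb : h + stepVal b ≤ 0 := by
        rcases stepVal_cases b with e | e <;> omega
      match j with
      | 0 => simpa
      | j + 1 =>
        have := ih hb (h := h + stepVal b) j (by simpa using hj)
        simpa [add_assoc] using this
    · rw [sb, if_neg hmin] at hj ⊢
      simp only [List.length_nil, Nat.le_zero] at hj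
      subst hj
      simpa using hh

lemma sb_rest_head {h : ℤ} {l : List Bool} {b : Bool} {t : List Bool}
    (ht : (sb h l).2 = b :: t) :
    0 ≤ min (h + sumL (sb h l).1) (h + sumL (sb h l).1 + stepVal b) := by
  induction l generalizing h with
  | nil => simp [sb] at ht
  | cons b' t' ih =>
    rw [sb] at ht ⊢
    split at ht
    · rename_i hmin
      rw [if_pos hmin]
      have := ih (h := h + stepVal b') ht
      simpa [add_assoc] using this
    · rename_i hmin
      rw [if_neg hmin]
      cases ht
      simpa using not_lt.mp hmin

lemma sb_append {h : ℤ} {x y : List Bool}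
    (hx : ∀ j, j ≤ x.length → h + sumL (x.take j) ≤ 0)
    (hy : ∀ b t, y = b :: t → 0 ≤ min (h + sumL x) (h + sumL x + stepVal b)) :
    sb h (x ++ y) = (x, y) := by
  induction x generalizing h with
  | nil =>
    cases y with
    | nil => rfl
    | cons b t =>
      have := hy b t rfl
      simp only [List.nil_append, sb]
      rw [if_neg]
      simpa using this
  | cons b' t' ih =>
    have h0 : h ≤ 0 := by simpa using hx 0 (by simp)
    have h1 : h + stepVal b' ≤ 0 := by simpa using hx 1 (by simp)
    have hmin : min h (h + stepVal b') < 0 := by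
      rcases stepVal_cases b' with e | e <;> omega
    simp only [List.cons_append, sb, if_pos hmin]
    have hrec : sb (h + stepVal b') (t' ++ y) = (t', y) := by
      apply ih
      · intro j hj
        have := hx (j + 1) (by simpa using hj)
        simpa [add_assoc] using this
      · intro b t hbt
        have := hy b t hbt
        simpa [add_assoc] using this
    rw [hrec]

/-! ### first-return splitter -/

def fr : ℤ → List Bool → List Bool × List Bool
  | _, [] => ([], [])
  | h, b :: t =>
    if h + stepVal b = 0 then ([b], t)
    else (b :: (fr (h + stepVal b) t).1, (fr (h + stepVal b) t).2)

lemma fr_eq : ∀ (h : ℤ) (l : List Bool), (fr h l).1 ++ (fr h l).2 = l := by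
  intro h l
  induction l generalizing h with
  | nil => rfl
  | cons b t ih =>
    rw [fr]
    split
    · rfl
    · simpa using ih (h + stepVal b)

lemma fr_returns {h : ℤ} {l : List Bool}
    (hex : ∃ j, 1 ≤ j ∧ j ≤ l.length ∧ h + sumL (l.take j) = 0) :
    h + sumL (fr h l).1 = 0 := by
  induction l generalizing h with
  | nil =>
    obtain ⟨j, hj1, hj2, _⟩ := hex
    simp at hj2; omega
  | cons b t ih =>
    by_cases he : h + stepVal b = 0
    · rw [fr, if_pos he]; simpa using he
    · rw [fr, if_neg he]
      simp only [sumL_cons, ← add_assoc]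
      apply ih
      obtain ⟨j, hj1, hj2, hj3⟩ := hex
      match j with
      | 1 => simp at hj3; exact absurd hj3 he
      | j + 2 =>
        refine ⟨j + 1, by omega, by simpa using hj2, ?_⟩
        simpa [add_assoc] using hj3

lemma fr_pos {h : ℤ} (hh : 1 ≤ h) (l : List Bool) :
    ∀ j, j < (fr h l).1.length → 1 ≤ h + sumL ((fr h l).1.take j) := by
  induction l generalizing h with
  | nil => intro j hj; simp [fr] at hj
  | cons b t ih =>
    intro j hj
    by_cases he : h + stepVal b = 0
    · rw [fr, if_pos he] at hj ⊢
      simp only [List.length_cons, List.length_nil] at hj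
      interval_cases j <;> simpa
    · rw [fr, if_neg he] at hj ⊢
      have hb : 1 ≤ h + stepVal b := by
        rcases stepVal_cases b with e | e <;> omega
      match j with
      | 0 => simpa
      | j + 1 =>
        have := ih hb (h := h + stepVal b) j (by simpa using hj)
        simpa [add_assoc] using this

lemma fr_append {h : ℤ} {x y : List Bool} (hx : x ≠ [])
    (hsum : h + sumL x = 0)
    (hmid : ∀ j, 1 ≤ j → j < x.length → h + sumL (x.take j) ≠ 0) :
    fr h (x ++ y) = (x, y) := by
  induction x generalizing h with
  | nil => exact absurd rfl hx
  | cons b t ih =>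
    cases t with
    | nil =>
      simp only [sumL_cons, sumL_nil, add_zero] at hsum
      simp [fr, hsum]
    | cons b' t' =>
      have hne : ¬ h + stepVal b = 0 := by
        have := hmid 1 le_rfl (by simp)
        simpa using this
      simp only [List.cons_append, fr, if_neg hne]
      have hrec : fr (h + stepVal b) ((b' :: t') ++ y) = (b' :: t', y) := by
        apply ih (by simp)
        · simp only [sumL_cons] at hsum ⊢; omega
        · intro j hj1 hj2
          have := hmid (j + 1) (by omega) (by simpa using hj2)
          simpa [add_assoc] using this
      simp only [List.cons_append, fr] at hrec
      rw [hrec]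


/-! ### flip -/

def fl (l : List Bool) : List Bool := l.map not

@[simp] lemma fl_nil : fl [] = [] := rfl
@[simp] lemma fl_cons (b : Bool) (t : List Bool) : fl (b :: t) = (!b) :: fl t := rfl
@[simp] lemma fl_append (x y : List Bool) : fl (x ++ y) = fl x ++ fl y := by simp [fl]
@[simp] lemma fl_length (l : List Bool) : (fl l).length = l.length := by simp [fl]
@[simp] lemma fl_fl (l : List Bool) : fl (fl l) = l := by induction l <;> simp_all

lemma stepVal_not (b : Bool) : stepVal (!b) = - stepVal b := by
  cases b <;> simp [stepVal]

@[simp] lemma sumL_fl (l : List Bool) : sumL (fl l) = - sumL l := by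
  induction l with
  | nil => simp
  | cons b t ih => simp [stepVal_not, ih]; ring

lemma fl_take (j : ℕ) (l : List Bool) : (fl l).take j = fl (l.take j) := by
  simp [fl, List.map_take]

lemma bc_fl (l : List Bool) : ∀ h : ℤ, bc (-h) (fl l) + bc h l = l.length := by
  induction l with
  | nil => simp
  | cons b t ih =>
    intro h
    have key : (if min (-h) (-(h + stepVal b)) < 0 then 1 else 0) +
        (if min h (h + stepVal b) < 0 then 1 else 0) = 1 := by
      rcases stepVal_cases b with e | e <;> rw [e] <;> split <;> split <;> omega
    have harg : -h + stepVal (!b) = -(h + stepVal b) := by rw [stepVal_not]; ring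
    rw [fl_cons, bc_cons, bc_cons, harg]
    have := ih (h + stepVal b)
    simp only [List.length_cons]
    omega

/-! ### last element of first-return block -/

lemma fr_last {h : ℤ} {l : List Bool} (hh : 1 ≤ h)
    (hret : h + sumL (fr h l).1 = 0) :
    ∃ B, (fr h l).1 = B ++ [false] ∧ sumL B = -h + 1 := by
  have hne : (fr h l).1 ≠ [] := by
    intro he; rw [he] at hret; simp at hret; omega
  obtain ⟨B, b, hBb⟩ : ∃ B b, (fr h l).1 = B ++ [b] :=
    ⟨_, _, (List.dropLast_append_getLast hne).symm⟩
  have hlen : B.length < (fr h l).1.length := by rw [hBb]; simp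
  have hpos := fr_pos hh l B.length hlen
  have htake : (fr h l).1.take B.length = B := by
    rw [hBb, List.take_append_of_le_length le_rfl, List.take_length]
  rw [htake] at hpos
  have hsum : sumL B + stepVal b = -h := by
    rw [hBb] at hret; simp at hret; omega
  have hb : b = false := by
    cases b
    · rfl
    · exfalso; simp [stepVal] at hsum; omega
  subst hb
  simp only [stepVal, if_false, Bool.false_eq_true] at hsum
  exact ⟨B, hBb, by omega⟩

/-! ### the Chung-Feller bijection on lists -/

def phi (l : List Bool) : List Bool :=
  if (sb 0 l).2 = [] then l
  else
    (fr 1 (sb 0 l).2.tail).1.dropLast ++ [false] ++ (sb 0 l).1 ++ [true]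
      ++ (fr 1 (sb 0 l).2.tail).2

lemma phi_eq {l x : List Bool} {b : Bool} {y : List Bool}
    (h1 : (sb 0 l).1 = x) (h2 : (sb 0 l).2 = b :: y) :
    phi l = (fr 1 y).1.dropLast ++ [false] ++ x ++ [true] ++ (fr 1 y).2 := by
  rw [phi, if_neg (by simp [h2]), h1, h2, List.tail_cons]

lemma decomp {l : List Bool} (hs : sumL l = 0) (hb : bc 0 l < l.length) :
    ∃ a B c : List Bool,
      l = a ++ [true] ++ B ++ [false] ++ c ∧
      phi l = B ++ [false] ++ a ++ [true] ++ c ∧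
      sumL a = 0 ∧ sumL B = 0 ∧ sumL c = 0 ∧
      (∀ j, j ≤ a.length → sumL (a.take j) ≤ 0) ∧
      (∀ j, j ≤ B.length → 0 ≤ sumL (B.take j)) := by
  obtain ⟨a, r, har⟩ : ∃ a r, sb 0 l = (a, r) := ⟨_, _, rfl⟩
  have hsplit : a ++ r = l := by have := sb_eq 0 l; rwa [har] at this
  have ha_heights : ∀ j, j ≤ a.length → sumL (a.take j) ≤ 0 := by
    intro j hj
    have := sb_heights (le_refl (0:ℤ)) l (h := 0)
    rw [har] at this
    simpa using this j hj
  have hane : r ≠ [] := by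
    intro he
    rw [he, List.append_nil] at hsplit
    have : bc 0 l = l.length := by
      rw [← hsplit]
      exact bc_eq_length_of (fun j hj => by simpa using ha_heights j hj)
    omega
  obtain ⟨b, r', hr'⟩ := List.exists_cons_of_ne_nil hane
  have hhead : 0 ≤ min ((0:ℤ) + sumL a) (0 + sumL a + stepVal b) := by
    have := sb_rest_head (h := 0) (l := l) (b := b) (t := r') (by rw [har]; exact hr')
    rwa [har] at this
  have hsa : sumL a = 0 := by
    have h1 : sumL a ≤ 0 := by
      have := ha_heights a.length le_rfl
      simpa [List.take_length] using this
    simp only [zero_add] at hhead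
    omega
  have hbtrue : b = true := by
    cases b
    · exfalso
      simp only [zero_add, hsa, stepVal] at hhead
      norm_num at hhead
    · rfl
  subst hbtrue
  subst hr'
  have hlr : l = a ++ [true] ++ r' := by rw [← hsplit]; simp
  have hsr' : sumL r' = -1 := by
    rw [hlr] at hs
    simp [hsa, stepVal] at hs
    omega
  obtain ⟨m, c, hmc⟩ : ∃ m c, fr 1 r' = (m, c) := ⟨_, _, rfl⟩
  have hret : (1:ℤ) + sumL m = 0 := by
    have : (1:ℤ) + sumL (fr 1 r').1 = 0 := by
      apply fr_returns
      refine ⟨r'.length, ?_, le_rfl, by simp [List.take_length, hsr']⟩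
      rcases r' with _ | ⟨x, t⟩
      · simp at hsr'
      · simp
    rwa [hmc] at this
  obtain ⟨B, hB, hsB0⟩ : ∃ B, m = B ++ [false] ∧ sumL B = -(1:ℤ) + 1 := by
    have := fr_last (le_refl (1:ℤ)) (l := r')
    rw [hmc] at this
    exact this hret
  have hsB : sumL B = 0 := by omega
  have hmcr : m ++ c = r' := by have := fr_eq 1 r'; rwa [hmc] at this
  have hl : l = a ++ [true] ++ B ++ [false] ++ c := by
    rw [hlr, ← hmcr, hB]; simp
  have hphi : phi l = B ++ [false] ++ a ++ [true] ++ c := by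
    rw [phi_eq (by rw [har]) (by rw [har]), hmc, hB, List.dropLast_concat]
  have hBpos : ∀ j, j ≤ B.length → 0 ≤ sumL (B.take j) := by
    intro j hj
    have hlt : j < (fr 1 r').1.length := by rw [hmc, hB]; simp; omega
    have := fr_pos (le_refl (1:ℤ)) r' j hlt
    rw [hmc, hB, List.take_append_of_le_length hj] at this
    omega
  have hsc : sumL c = 0 := by
    rw [hl] at hs
    simp [hsa, hsB, stepVal] at hs
    omega
  exact ⟨a, B, c, hl, hphi, hsa, hsB, hsc, ha_heights, hBpos⟩

lemma main (l : List Bool) (hs : sumL l = 0) (hb : bc 0 l < l.length) :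
    (phi l).length = l.length ∧ sumL (phi l) = 0 ∧ bc 0 (phi l) = bc 0 l + 2 ∧
      phi (fl (phi l)) = fl l := by
  obtain ⟨a, B, c, hl, hphi, hsa, hsB, hsc, haH, hBH⟩ := decomp hs hb
  refine ⟨?_, ?_, ?_, ?_⟩
  · rw [hphi, hl]; simp; omega
  · rw [hphi]; simp [hsa, hsB, hsc, stepVal]
  · have e1 : bc 0 (phi l) = a.length + 2 + bc 0 c := by
      rw [hphi]
      have : B ++ [false] ++ a ++ [true] ++ c = B ++ (false :: (a ++ (true :: c))) := by simp
      rw [this, bc_append, bc_eq_zero_of (fun j hj => by simpa using hBH j hj)]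
      rw [bc_cons]
      have i1 : min (0 + sumL B) (0 + sumL B + stepVal false) < 0 := by
        simp [hsB, stepVal]
      rw [if_pos i1, bc_append]
      have e2 : (0:ℤ) + sumL B + stepVal false = -1 := by simp [hsB, stepVal]
      rw [e2, bc_eq_length_of (x := a) (fun j hj => by have := haH j hj; omega)]
      rw [bc_cons]
      have i2 : min (-1 + sumL a) (-1 + sumL a + stepVal true) < 0 := by
        simp [hsa, stepVal]
      rw [if_pos i2]
      have e3 : (-1:ℤ) + sumL a + stepVal true = 0 := by simp [hsa, stepVal]
      rw [e3]
      omega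
    have e2 : bc 0 l = a.length + bc 0 c := by
      rw [hl]
      have : a ++ [true] ++ B ++ [false] ++ c = a ++ (true :: (B ++ (false :: c))) := by simp
      rw [this, bc_append, bc_eq_length_of (x := a) (fun j hj => by have := haH j hj; omega)]
      rw [bc_cons]
      have i1 : ¬ min (0 + sumL a) (0 + sumL a + stepVal true) < 0 := by
        simp [hsa, stepVal]
      rw [if_neg i1, bc_append]
      have e3 : (0:ℤ) + sumL a + stepVal true = 1 := by simp [hsa, stepVal]
      rw [e3, bc_eq_zero_of (x := B) (fun j hj => by have := hBH j hj; omega)]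
      rw [bc_cons]
      have i2 : ¬ min (1 + sumL B) (1 + sumL B + stepVal false) < 0 := by
        simp [hsB, stepVal]
      rw [if_neg i2]
      have e4 : (1:ℤ) + sumL B + stepVal false = 0 := by simp [hsB, stepVal]
      rw [e4]
      omega
    omega
  · have hflphi : fl (phi l) = fl B ++ ((true :: (fl a ++ ([false] ++ fl c)))) := by
      rw [hphi]; simp
    have hsb2 : sb 0 (fl (phi l)) = (fl B, true :: (fl a ++ ([false] ++ fl c))) := by
      rw [hflphi]
      apply sb_append
      · intro j hj
        rw [fl_take, sumL_fl]
        have := hBH j (by simpa using hj)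
        omega
      · intro b t hbt
        cases hbt
        simp [hsB, stepVal]
    have hfr2 : fr 1 (fl a ++ ([false] ++ fl c)) = (fl a ++ [false], fl c) := by
      have : fl a ++ ([false] ++ fl c) = (fl a ++ [false]) ++ fl c := by simp
      rw [this]
      apply fr_append
      · simp
      · simp [hsa, stepVal]
      · intro j hj1 hj2
        simp only [List.length_append, List.length_cons, List.length_nil, fl_length] at hj2
        have hja : j ≤ a.length := by omega
        rw [List.take_append_of_le_length (by simpa using hja), fl_take, sumL_fl]
        have := haH j hja
        omega
    rw [phi_eq (l := fl (phi l)) (by rw [hsb2]) (by rw [hsb2]), hfr2]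
    simp only [List.dropLast_concat]
    rw [hl]
    simp


/-! ### transfer -/

lemma bc_sum (l : List Bool) : ∀ h : ℤ, bc h l = ∑ j ∈ Finset.range l.length,
    (if min (h + sumL (l.take j)) (h + sumL (l.take (j+1))) < 0 then 1 else 0) := by
  induction l with
  | nil => simp
  | cons b t ih =>
    intro h
    rw [List.length_cons, Finset.sum_range_succ', bc_cons, ih (h + stepVal b), add_comm]
    congr 1
    · apply Finset.sum_congr rfl
      intro j hj
      congr 2 <;> simp [add_assoc]
    · simp

def ofList (m : ℕ) (l : List Bool) : Fin m → Bool := fun i => l.getD i.1 true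

lemma ofFn_ofList {m : ℕ} {l : List Bool} (hl : l.length = m) :
    List.ofFn (ofList m l) = l := by
  apply List.ext_getElem (by simp [hl])
  intro i h1 h2
  simp [ofList, List.getD_eq_getElem?_getD, List.getElem?_eq_getElem h2]

lemma ofList_ofFn {m : ℕ} (f : Fin m → Bool) : ofList m (List.ofFn f) = f := by
  funext i
  simp [ofList, List.getD_eq_getElem?_getD, List.getElem?_eq_getElem, i.2]

lemma psum_eq {m : ℕ} (f : Fin m → Bool) (p : ℕ) :
    psum f p = sumL ((List.ofFn f).take p) := rfl

lemma psum_last {m : ℕ} (f : Fin m → Bool) : psum f m = sumL (List.ofFn f) := by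
  rw [psum_eq, List.take_of_length_le (by simp)]

lemma belowSteps_card {m : ℕ} (f : Fin m → Bool) :
    (belowSteps f).card = bc 0 (List.ofFn f) := by
  rw [belowSteps, Finset.card_filter, bc_sum]
  rw [Fin.sum_univ_eq_sum_range
    (fun j => if min (psum f j) (psum f (j+1)) < 0 then (1:ℕ) else 0)]
  rw [List.length_ofFn]
  apply Finset.sum_congr rfl
  intro j hj
  have h1 : (0:ℤ) + sumL ((List.ofFn f).take j) = psum f j := by rw [psum_eq]; ring
  have h2 : (0:ℤ) + sumL ((List.ofFn f).take (j+1)) = psum f (j+1) := by rw [psum_eq]; ring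
  rw [h1, h2]

end CF

namespace CF

lemma bc_fl0 (l : List Bool) : bc 0 (fl l) + bc 0 l = l.length := by
  have := bc_fl l 0
  rwa [neg_zero] at this

end CF

open CF in
/-- The number of k-negative paths of length 2n is independent of k: for 0 ≤ k < n,
the number of paths from (0,0) to (2n,0) with exactly 2k steps below the x-axis
equals the number with exactly 2(k+1) steps below the x-axis. -/
theorem card_S_k_eq_card_S_succ (n k : ℕ) (hk : k < n) :
    ((Finset.univ : Finset (Fin (2 * n) → Bool)).filter fun f =>
        psum f (2 * n) = 0 ∧ (belowSteps f).card = 2 * k).card =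
    ((Finset.univ : Finset (Fin (2 * n) → Bool)).filter fun f =>
        psum f (2 * n) = 0 ∧ (belowSteps f).card = 2 * (k + 1)).card := by
  classical
  apply Finset.card_nbij'
    (i := fun f => ofList (2*n) (phi (List.ofFn f)))
    (j := fun g => ofList (2*n) (fl (phi (fl (List.ofFn g)))))
  · -- hi
    intro f hf
    rw [Finset.mem_coe, Finset.mem_filter] at hf ⊢
    have hsum := hf.2.1
    have hcard := hf.2.2
    set l := List.ofFn f with hldef
    have hs : sumL l = 0 := by rw [← psum_last f]; exact hsum
    have hbcl : bc 0 l = 2 * k := by rw [← belowSteps_card]; exact hcard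
    have hblt : bc 0 l < l.length := by
      rw [hbcl, List.length_ofFn]; omega
    obtain ⟨hlen, hsum', hbc, -⟩ := main l hs hblt
    have hofn : List.ofFn (ofList (2*n) (phi l)) = phi l :=
      ofFn_ofList (by rw [hlen, List.length_ofFn])
    refine ⟨Finset.mem_univ _, ?_, ?_⟩
    · rw [psum_last, hofn]; exact hsum'
    · rw [belowSteps_card, hofn, hbc, hbcl]; ring
  · -- hj
    intro g hg
    rw [Finset.mem_coe, Finset.mem_filter] at hg ⊢
    have hsum := hg.2.1
    have hcard := hg.2.2
    set l' := List.ofFn g with hldef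
    have hs' : sumL l' = 0 := by rw [← psum_last g]; exact hsum
    have hbcl' : bc 0 l' = 2 * (k + 1) := by rw [← belowSteps_card]; exact hcard
    have hfl0 := bc_fl0 l'
    have hlen' : l'.length = 2 * n := List.length_ofFn
    have hs2 : sumL (fl l') = 0 := by rw [sumL_fl, hs', neg_zero]
    have hb2 : bc 0 (fl l') < (fl l').length := by
      rw [fl_length, hlen']; omega
    obtain ⟨hlen2, hsum2, hbc2, -⟩ := main (fl l') hs2 hb2
    have hofn : List.ofFn (ofList (2*n) (fl (phi (fl l')))) = fl (phi (fl l')) :=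
      ofFn_ofList (by rw [fl_length, hlen2, fl_length, hlen'])
    refine ⟨Finset.mem_univ _, ?_, ?_⟩
    · rw [psum_last, hofn, sumL_fl, hsum2, neg_zero]
    · rw [belowSteps_card, hofn]
      have := bc_fl0 (phi (fl l'))
      have hlen3 : (phi (fl l')).length = 2 * n := by rw [hlen2, fl_length, hlen']
      rw [hlen3] at this
      have hbfl : bc 0 (fl l') = 2 * n - 2 * (k + 1) := by omega
      omega
  · -- left inverse
    intro f hf
    rw [Finset.mem_coe, Finset.mem_filter] at hf
    beta_reduce
    set l := List.ofFn f with hldef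
    have hs : sumL l = 0 := by rw [← psum_last f]; exact hf.2.1
    have hblt : bc 0 l < l.length := by
      have : bc 0 l = 2 * k := by rw [← belowSteps_card]; exact hf.2.2
      rw [this, List.length_ofFn]; omega
    obtain ⟨hlen, -, -, hinv⟩ := main l hs hblt
    have hofn : List.ofFn (ofList (2*n) (phi l)) = phi l :=
      ofFn_ofList (by rw [hlen, List.length_ofFn])
    simp only [hofn, hinv, fl_fl]
    exact ofList_ofFn f
  · -- right inverse
    intro g hg
    rw [Finset.mem_coe, Finset.mem_filter] at hg
    beta_reduce
    set l' := List.ofFn g with hldef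
    have hs' : sumL l' = 0 := by rw [← psum_last g]; exact hg.2.1
    have hbcl' : bc 0 l' = 2 * (k + 1) := by rw [← belowSteps_card]; exact hg.2.2
    have hfl0 := bc_fl0 l'
    have hlen' : l'.length = 2 * n := List.length_ofFn
    have hs2 : sumL (fl l') = 0 := by rw [sumL_fl, hs', neg_zero]
    have hb2 : bc 0 (fl l') < (fl l').length := by rw [fl_length, hlen']; omega
    obtain ⟨hlen2, -, -, hinv⟩ := main (fl l') hs2 hb2
    have hofn : List.ofFn (ofList (2*n) (fl (phi (fl l')))) = fl (phi (fl l')) :=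
      ofFn_ofList (by rw [fl_length, hlen2, fl_length, hlen'])
    simp only [hofn, hinv, fl_fl]
    exact ofList_ofFn g
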